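/- Let v : [ρ₀, ∞) → (0, ∞) be a C¹ decreasing function with 1 < p < q, and suppose there are constants κ > 0, ρ₁ ≥ ρ₀ such that (−v'(s))^{p−1} ≥ κ v(s)^{q−1} s for all s ≥ ρ₁. Then there exists κ̃ > 0 such that v(s) ≤ κ̃ s^{−p/(q−p)} for all sufficiently large s. -/

import Mathlib

open Real Filter

/-- ODE comparison step of the decay estimate. If `v > 0` is `C¹` and
decreasing on `[ρ₀,∞)`, `1 < p < q`, and `(−v'(s))^{p−1} ≥ κ v(s)^{q−1} s` for
`s ≥ ρ₁`, then `v(s) ≤ κ̃ s^{−p/(q−p)}` for all large `s`. -/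
theorem stmt_12 (p q ρ₀ ρ₁ κ : ℝ) (hp : 1 < p) (hpq : p < q)
    (hρ : ρ₀ ≤ ρ₁) (hρ₀ : 0 < ρ₀) (hκ : 0 < κ)
    (v v' : ℝ → ℝ)
    (hderiv : ∀ s, ρ₀ ≤ s → HasDerivAt v (v' s) s)
    (hcont : ContinuousOn v' (Set.Ici ρ₀))
    (hpos : ∀ s, ρ₀ ≤ s → 0 < v s)
    (hdec : ∀ s, ρ₀ ≤ s → v' s ≤ 0)
    (hkey : ∀ s, ρ₁ ≤ s → κ * v s ^ (q - 1) * s ≤ (-(v' s)) ^ (p - 1)) :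
    ∃ κ' : ℝ, 0 < κ' ∧ ∃ s₀ : ℝ, ∀ s, s₀ ≤ s → v s ≤ κ' * s ^ (-(p / (q - p))) := by
  have hp1 : (0:ℝ) < p - 1 := by linarith
  have hqp : (0:ℝ) < q - p := by linarith
  set α : ℝ := (q - p) / (p - 1) with hα_def
  have hα : 0 < α := div_pos hqp hp1
  set β : ℝ := p / (p - 1) with hβ_def
  have hβ : 0 < β := div_pos (by linarith) hp1
  have hβ1 : β - 1 = (p - 1)⁻¹ := by rw [hβ_def, div_sub_one hp1.ne']; ring
  set c : ℝ := α * κ ^ (p - 1)⁻¹ with hc_def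
  have hc : 0 < c := by positivity
  set c' : ℝ := c / β with hc'_def
  have hc' : 0 < c' := div_pos hc hβ
  set w : ℝ → ℝ := fun s => v s ^ (-α) with hw_def
  set F : ℝ → ℝ := fun s => w s - c' * s ^ β with hF_def
  -- derivative of F
  have hFderiv : ∀ s, ρ₀ ≤ s → HasDerivAt F
      ((-α) * v s ^ (-α - 1) * v' s - c' * (β * s ^ (β - 1))) s := by
    intro s hs
    have hvpos := hpos s hs
    have h1' := (hderiv s hs).rpow_const (Or.inl hvpos.ne') (p := -α)
    have h1 : HasDerivAt w ((-α) * v s ^ (-α - 1) * v' s) s := by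
      convert h1' using 1; ring
    have hs0 : s ≠ 0 := (lt_of_lt_of_le hρ₀ hs).ne'
    have h2 : HasDerivAt (fun s : ℝ => c' * s ^ β) (c' * (β * s ^ (β - 1))) s :=
      (Real.hasDerivAt_rpow_const (Or.inl hs0)).const_mul c'
    exact h1.sub h2
  -- key pointwise derivative bound
  have hFkey : ∀ s, ρ₁ ≤ s → 0 ≤ (-α) * v s ^ (-α - 1) * v' s - c' * (β * s ^ (β - 1)) := by
    intro s hs
    have hs₀ : ρ₀ ≤ s := le_trans hρ hs
    have hvpos := hpos s hs₀
    have hspos : 0 < s := lt_of_lt_of_le hρ₀ hs₀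
    have hnv : 0 ≤ -(v' s) := by linarith [hdec s hs₀]
    have hr : (0:ℝ) ≤ (p - 1)⁻¹ := by positivity
    have hkey' := hkey s hs
    have hLnn : 0 ≤ κ * v s ^ (q - 1) * s := by positivity
    have h2 : (κ * v s ^ (q - 1) * s) ^ (p - 1)⁻¹ ≤ ((-(v' s)) ^ (p - 1)) ^ (p - 1)⁻¹ :=
      Real.rpow_le_rpow hLnn hkey' hr
    have h3 : ((-(v' s)) ^ (p - 1)) ^ (p - 1)⁻¹ = -(v' s) := by
      rw [← Real.rpow_mul hnv, mul_inv_cancel₀ hp1.ne', Real.rpow_one]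
    have h4 : (κ * v s ^ (q - 1) * s) ^ (p - 1)⁻¹
        = κ ^ (p - 1)⁻¹ * v s ^ ((q - 1) * (p - 1)⁻¹) * s ^ (p - 1)⁻¹ := by
      rw [Real.mul_rpow (by positivity) hspos.le, Real.mul_rpow hκ.le (by positivity),
        ← Real.rpow_mul hvpos.le]
    rw [h3, h4] at h2
    -- multiply by α * v s ^ (-α - 1) > 0
    have hvm : 0 < v s ^ (-α - 1) := Real.rpow_pos_of_pos hvpos _
    have h5 : α * v s ^ (-α - 1) * (κ ^ (p - 1)⁻¹ * v s ^ ((q - 1) * (p - 1)⁻¹) * s ^ (p - 1)⁻¹)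
        ≤ α * v s ^ (-α - 1) * (-(v' s)) := by
      apply mul_le_mul_of_nonneg_left h2 (by positivity)
    have h6 : v s ^ (-α - 1) * v s ^ ((q - 1) * (p - 1)⁻¹) = 1 := by
      rw [← Real.rpow_add hvpos]
      have : (-α - 1) + (q - 1) * (p - 1)⁻¹ = 0 := by
        have hαp : α * (p - 1) = q - p := by rw [hα_def]; exact div_mul_cancel₀ _ hp1.ne'
        field_simp [hα_def]
        linear_combination -hαp
      rw [this, Real.rpow_zero]
    have hcβ : c' * β = α * κ ^ (p - 1)⁻¹ := by
      rw [hc'_def, div_mul_cancel₀ _ hβ.ne', hc_def]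
    have h7 : c' * (β * s ^ (β - 1)) = α * κ ^ (p - 1)⁻¹ * s ^ (p - 1)⁻¹ := by
      rw [hβ1, ← mul_assoc, hcβ]
    rw [h7]
    have h11 : α * v s ^ (-α - 1) * (κ ^ (p - 1)⁻¹ * v s ^ ((q - 1) * (p - 1)⁻¹) * s ^ (p - 1)⁻¹)
        = α * κ ^ (p - 1)⁻¹ * s ^ (p - 1)⁻¹ := by
      rw [show α * v s ^ (-α - 1) * (κ ^ (p - 1)⁻¹ * v s ^ ((q - 1) * (p - 1)⁻¹) * s ^ (p - 1)⁻¹)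
          = α * κ ^ (p - 1)⁻¹ * s ^ (p - 1)⁻¹ * (v s ^ (-α - 1) * v s ^ ((q - 1) * (p - 1)⁻¹))
          from by ring, h6, mul_one]
    rw [h11] at h5
    linarith
  -- monotonicity of F on [ρ₁, ∞)
  have hmono : MonotoneOn F (Set.Ici ρ₁) := by
    apply monotoneOn_of_hasDerivWithinAt_nonneg (convex_Ici ρ₁)
      (f' := fun s => (-α) * v s ^ (-α - 1) * v' s - c' * (β * s ^ (β - 1)))
    · intro s hs
      exact (hFderiv s (le_trans hρ hs)).continuousAt.continuousWithinAt
    · intro s hs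
      rw [interior_Ici] at hs
      exact (hFderiv s (by exact le_trans hρ (le_of_lt hs))).hasDerivWithinAt
    · intro s hs
      rw [interior_Ici] at hs
      exact hFkey s (le_of_lt hs)
  set C : ℝ := w ρ₁ - c' * ρ₁ ^ β with hC_def
  -- eventual positivity
  have htend : Tendsto (fun s : ℝ => c' / 2 * s ^ β) atTop atTop :=
    (tendsto_rpow_atTop hβ).const_mul_atTop (by positivity)
  have hev : ∀ᶠ s in atTop, (-C ≤ c' / 2 * s ^ β ∧ ρ₁ ≤ s) :=
    (htend.eventually_ge_atTop (-C)).and (eventually_ge_atTop ρ₁)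
  rw [eventually_atTop] at hev
  obtain ⟨s₀, hs₀⟩ := hev
  refine ⟨(c' / 2) ^ (-α⁻¹), Real.rpow_pos_of_pos (by positivity) _, s₀, ?_⟩
  intro s hs
  obtain ⟨h1, h2⟩ := hs₀ s hs
  have hs₀' : ρ₀ ≤ s := le_trans hρ h2
  have hspos : 0 < s := lt_of_lt_of_le hρ₀ hs₀'
  have hvpos := hpos s hs₀'
  have hm := hmono (Set.mem_Ici.mpr le_rfl) (Set.mem_Ici.mpr h2) h2
  -- F ρ₁ ≤ F s means C + c' s^β ≤ w s
  have hw : c' / 2 * s ^ β ≤ w s := by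
    have hm' : w ρ₁ - c' * ρ₁ ^ β ≤ w s - c' * s ^ β := hm
    have hdouble : c' * s ^ β = 2 * (c' / 2 * s ^ β) := by ring
    linarith
  have hApos : 0 < c' / 2 * s ^ β := by positivity
  -- apply antitone rpow
  have h8 : (v s ^ (-α)) ^ (-α⁻¹) ≤ (c' / 2 * s ^ β) ^ (-α⁻¹) :=
    Real.rpow_le_rpow_of_nonpos hApos hw (by simp [le_of_lt, hα, inv_pos])
  have h9 : (v s ^ (-α)) ^ (-α⁻¹) = v s := by
    rw [← Real.rpow_mul hvpos.le, neg_mul_neg, mul_inv_cancel₀ hα.ne', Real.rpow_one]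
  have hexp : β * -α⁻¹ = -(p / (q - p)) := by
    rw [hβ_def, hα_def, inv_div]
    field_simp
  have h10 : (c' / 2 * s ^ β) ^ (-α⁻¹) = (c' / 2) ^ (-α⁻¹) * s ^ (-(p / (q - p))) := by
    rw [Real.mul_rpow (by positivity) (by positivity), ← Real.rpow_mul hspos.le, hexp]
  rw [h9, h10] at h8
  exact h8
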